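/- Let (P, ⪯, ∧) be a meet semilattice and let f : P → ℝ be positive definite. Then f is monotone with respect to the partial order: if x ⪯ y for x, y ∈ P, then f(x) ≤ f(y). -/

import Mathlib

/-- A function `f : P → ℝ` on a meet semilattice is *positive definite* if for every
finite nonempty subset `S ⊆ P` the meet matrix `(S)_f`, with entries `f (x ⊓ y)` for
`x, y ∈ S`, is positive semidefinite. -/
def IsPosDefOnMeets {P : Type*} [SemilatticeInf P] (f : P → ℝ) : Prop :=
  ∀ S : Finset P, S.Nonempty →
    (Matrix.of fun x y : S => f (x.1 ⊓ y.1)).PosSemidef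

/-- If `f` is positive definite on a meet semilattice, then `f` is
monotone: `x ⪯ y` implies `f(x) ≤ f(y)`. -/
theorem posDef_monotone {P : Type*} [SemilatticeInf P] (f : P → ℝ)
    (hf : IsPosDefOnMeets f) : ∀ x y : P, x ≤ y → f x ≤ f y := by
  intro x y hxy
  rcases eq_or_ne x y with rfl | hne
  · exact le_refl _
  · classical
    set S : Finset P := {x, y} with hSdef
    have hS : S.Nonempty := ⟨x, by simp [hSdef]⟩
    set g : P → ℝ := fun p => if p = x then 1 else -1 with hg
    have h := (hf S hS).dotProduct_mulVec_nonneg (fun s => g s.1)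
    have key : dotProduct (star (fun s : S => g s.1))
        (Matrix.mulVec (Matrix.of fun a b : S => f (a.1 ⊓ b.1)) (fun s : S => g s.1))
        = f y - f x := by
      simp only [dotProduct, Matrix.mulVec, Matrix.of_apply, Pi.star_apply,
        star_trivial]
      rw [Finset.sum_coe_sort S (fun p => g p * ∑ j : S, f (p ⊓ j.1) * g j.1)]
      have hinner : ∀ p : P, (∑ j : S, f (p ⊓ j.1) * g j.1)
          = ∑ q ∈ S, f (p ⊓ q) * g q := fun p =>
        Finset.sum_coe_sort S (fun q => f (p ⊓ q) * g q)
      simp only [hinner]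
      rw [Finset.sum_pair hne]
      rw [Finset.sum_pair hne, Finset.sum_pair hne]
      have hxx : x ⊓ x = x := inf_idem x
      have hxy' : x ⊓ y = x := inf_eq_left.mpr hxy
      have hyx : y ⊓ x = x := inf_eq_right.mpr hxy
      have hyy : y ⊓ y = y := inf_idem y
      rw [hxx, hxy', hyx, hyy]
      simp only [hg, if_pos rfl, if_neg hne.symm]
      ring
    rw [key] at h
    linarith
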